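/- Let α > 0, r₀ > 0, θ₀ ∈ ℝ, and define x(t) = r(t)cos(θ(t)), y(t) = r(t)sin(θ(t)) where r(t) = r₀·√((1+α²τ²)/(1+τ²)) and θ(t) = θ₀ + arctan(ατ) − arctan(τ) with τ = tan(ft/2). Then for all t ∈ (−π/f, π/f), (x(t) − A)² + (y(t) − B)² = R², where A = ((α+1)/2)·r₀·cos θ₀, B = ((α+1)/2)·r₀·sin θ₀, and R = ((α−1)/2)·r₀. That is, each fluid particle of the pulsating-cylinder solution moves on a circle of radius |α−1|·r₀/2. -/

import Mathlib

lemma pc_cos_aux (α s : ℝ) :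
    Real.sqrt ((1 + (α*s)^2)/(1+s^2)) * Real.cos (Real.arctan (α*s) - Real.arctan s)
      = (1 + α*s^2)/(1+s^2) := by
  have h1 : (0:ℝ) < 1 + s ^ 2 := by positivity
  have h2 : (0:ℝ) < 1 + (α * s) ^ 2 := by positivity
  have hu : Real.sqrt (1 + s ^ 2) ^ 2 = 1 + s ^ 2 := Real.sq_sqrt h1.le
  have hu0 : 0 < Real.sqrt (1 + s ^ 2) := Real.sqrt_pos.2 h1
  have hv0 : 0 < Real.sqrt (1 + (α * s) ^ 2) := Real.sqrt_pos.2 h2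
  rw [Real.sqrt_div h2.le, Real.cos_sub, Real.cos_arctan, Real.sin_arctan,
      Real.cos_arctan, Real.sin_arctan]
  field_simp
  linear_combination (-(1 + α*s^2)) * hu

lemma pc_sin_aux (α s : ℝ) :
    Real.sqrt ((1 + (α*s)^2)/(1+s^2)) * Real.sin (Real.arctan (α*s) - Real.arctan s)
      = (α-1)*s/(1+s^2) := by
  have h1 : (0:ℝ) < 1 + s ^ 2 := by positivity
  have h2 : (0:ℝ) < 1 + (α * s) ^ 2 := by positivity
  have hu : Real.sqrt (1 + s ^ 2) ^ 2 = 1 + s ^ 2 := Real.sq_sqrt h1.le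
  have hu0 : 0 < Real.sqrt (1 + s ^ 2) := Real.sqrt_pos.2 h1
  have hv0 : 0 < Real.sqrt (1 + (α * s) ^ 2) := Real.sqrt_pos.2 h2
  rw [Real.sqrt_div h2.le, Real.sin_sub, Real.cos_arctan, Real.sin_arctan,
      Real.cos_arctan, Real.sin_arctan]
  field_simp
  linear_combination (-s*(α-1)) * hu

/-- Each fluid particle of the pulsating-cylinder solution moves on the circle
of centre (A,B) and radius |α−1|·r₀/2. -/
theorem pulsating_cylinder_circular_trajectories
    (f α r₀ θ₀ : ℝ) (hf : 0 < f) (hα : 0 < α) (hr₀ : 0 < r₀)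
    (τ r θ x y : ℝ → ℝ) (A B R : ℝ)
    (hτ : τ = fun t => Real.tan (f * t / 2))
    (hr : r = fun t => r₀ * Real.sqrt ((1 + α ^ 2 * (τ t) ^ 2) / (1 + (τ t) ^ 2)))
    (hθ : θ = fun t => θ₀ + Real.arctan (α * τ t) - Real.arctan (τ t))
    (hx : x = fun t => r t * Real.cos (θ t))
    (hy : y = fun t => r t * Real.sin (θ t))
    (hA : A = ((α + 1) / 2) * r₀ * Real.cos θ₀)
    (hB : B = ((α + 1) / 2) * r₀ * Real.sin θ₀)
    (hR : R = ((α - 1) / 2) * r₀) :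
    ∀ t ∈ Set.Ioo (-(Real.pi / f)) (Real.pi / f),
      (x t - A) ^ 2 + (y t - B) ^ 2 = R ^ 2 := by
  intro t ht
  subst hτ hr hθ hx hy hA hB hR
  simp only
  set s := Real.tan (f * t / 2) with hs
  have h1 : (0:ℝ) < 1 + s ^ 2 := by positivity
  have hq : (1 + α ^ 2 * s ^ 2) / (1 + s ^ 2) = (1 + (α * s) ^ 2) / (1 + s ^ 2) := by
    ring_nf
  have hass : θ₀ + Real.arctan (α * s) - Real.arctan s
      = θ₀ + (Real.arctan (α * s) - Real.arctan s) := by ring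
  have hc := pc_cos_aux α s
  have hsn := pc_sin_aux α s
  rw [hq, hass, Real.cos_add, Real.sin_add]
  have hX : r₀ * Real.sqrt ((1 + (α*s)^2)/(1+s^2)) *
      (Real.cos θ₀ * Real.cos (Real.arctan (α*s) - Real.arctan s)
        - Real.sin θ₀ * Real.sin (Real.arctan (α*s) - Real.arctan s))
      = r₀ * ((1 + α*s^2)/(1+s^2) * Real.cos θ₀ - (α-1)*s/(1+s^2) * Real.sin θ₀) := by
    linear_combination (r₀ * Real.cos θ₀) * hc - (r₀ * Real.sin θ₀) * hsn
  have hY : r₀ * Real.sqrt ((1 + (α*s)^2)/(1+s^2)) *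
      (Real.sin θ₀ * Real.cos (Real.arctan (α*s) - Real.arctan s)
        + Real.cos θ₀ * Real.sin (Real.arctan (α*s) - Real.arctan s))
      = r₀ * ((1 + α*s^2)/(1+s^2) * Real.sin θ₀ + (α-1)*s/(1+s^2) * Real.cos θ₀) := by
    linear_combination (r₀ * Real.sin θ₀) * hc + (r₀ * Real.cos θ₀) * hsn
  rw [hX, hY]
  have hp := Real.sin_sq_add_cos_sq θ₀
  field_simp
  linear_combination ((α-1)*(1+s^2))^2 * hp
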